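/- Let k : ℝ → ℝ be continuous, let s_k solve s_k''=-k·s_k, s_k(0)=0, s_k'(0)=1, and suppose s_k > 0 on (0, r]. Let ct_k = c_k/s_k where c_k solves the same ODE with c_k(0)=1, c_k'(0)=0, and let R : [0,r] → ℝ be continuous. Then ∫₀ʳ ∫₀^ρ (s_k(t)/s_k(ρ)²) · R(t) dt dρ = ∫₀ʳ (ct_k(t) - ct_k(r)) · s_k(t) · R(t) dt, provided both sides are finite. -/

import Mathlib

open intervalIntegral Set Filter MeasureTheory Topology

/-- Fubini reduction of the double integral in the quantitative Laplacian estimate: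
`∫₀ʳ ∫₀^ρ (s_k(t)/s_k(ρ)²) R(t) dt dρ = ∫₀ʳ (ct_k(t) - ct_k(r)) s_k(t) R(t) dt`,
where `ct_k = c_k/s_k`. -/
theorem double_integral_reduction
    (k s s' c c' : ℝ → ℝ) (hk : Continuous k)
    (hs : ∀ t, HasDerivAt s (s' t) t)
    (hs' : ∀ t, HasDerivAt s' (-(k t) * s t) t)
    (hs0 : s 0 = 0) (hs'0 : s' 0 = 1)
    (hc : ∀ t, HasDerivAt c (c' t) t)
    (hc' : ∀ t, HasDerivAt c' (-(k t) * c t) t)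
    (hc0 : c 0 = 1) (hc'0 : c' 0 = 0)
    (r : ℝ) (hr : 0 < r) (hspos : ∀ t ∈ Set.Ioc 0 r, 0 < s t)
    (R : ℝ → ℝ) (hR : ContinuousOn R (Set.Icc 0 r))
    (hInt : IntervalIntegrable
      (fun ρ => ∫ t in (0:ℝ)..ρ, (s t / (s ρ) ^ 2) * R t) MeasureTheory.volume 0 r)
    (hInt' : IntervalIntegrable
      (fun t => (c t / s t - c r / s r) * s t * R t) MeasureTheory.volume 0 r) :
    ∫ ρ in (0:ℝ)..r, ∫ t in (0:ℝ)..ρ, (s t / (s ρ) ^ 2) * R t =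
      ∫ t in (0:ℝ)..r, (c t / s t - c r / s r) * s t * R t := by
  have hscont : Continuous s := continuous_iff_continuousAt.mpr fun x => (hs x).continuousAt
  have hccont : Continuous c := continuous_iff_continuousAt.mpr fun x => (hc x).continuousAt
  -- clamped version of R
  set Rt : ℝ → ℝ := fun x => R (max 0 (min x r)) with hRtdef
  have hRtc : Continuous Rt := by
    apply hR.comp_continuous (continuous_const.max (continuous_id.min continuous_const))
    intro x
    exact ⟨le_max_left _ _, max_le hr.le (min_le_right x r)⟩
  have hReq : ∀ x ∈ Set.Icc (0:ℝ) r, Rt x = R x := fun x hx => by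
    simp only [hRtdef, min_eq_left hx.2, max_eq_right hx.1]
  set g : ℝ → ℝ := fun t => s t * Rt t with hgdef
  have hgc : Continuous g := hscont.mul hRtc
  set F : ℝ → ℝ := fun x => ∫ t in (0:ℝ)..x, g t with hFdef
  have hF : ∀ x, HasDerivAt F (g x) x := fun x => (hgc.integral_hasStrictDerivAt 0 x).hasDerivAt
  have hF0 : F 0 = 0 := integral_same
  -- Wronskian
  have hW : ∀ t, c' t * s t - c t * s' t = -1 := by
    have hd : ∀ t, HasDerivAt (fun t => c' t * s t - c t * s' t) 0 t := by
      intro t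
      have h1 := ((hc' t).fun_mul (hs t)).fun_sub ((hc t).fun_mul (hs' t))
      refine h1.congr_deriv ?_; ring
    intro t
    have h2 := is_const_of_deriv_eq_zero (f := fun t => c' t * s t - c t * s' t)
      (fun x => (hd x).differentiableAt) (fun x => (hd x).deriv) t 0
    simpa [hs0, hs'0, hc0, hc'0] using h2
  -- derivative of c/s
  have hct : ∀ t, s t ≠ 0 → HasDerivAt (fun ρ => c ρ / s ρ) (-((s t)^2)⁻¹) t := by
    intro t ht
    have h1 := (hc t).fun_div (hs t) ht
    refine h1.congr_deriv ?_
    rw [hW t]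
    field_simp
  -- key identity for x ∈ Ioo 0 r
  have hkey : ∀ x ∈ Set.Ioo (0:ℝ) r,
      (∫ ρ in x..r, ∫ t in (0:ℝ)..ρ, (s t / (s ρ) ^ 2) * R t) =
      (∫ t in x..r, (c t / s t - c r / s r) * s t * R t)
        + F x * (c x / s x - c r / s r) := by
    intro x hx
    have hxr : x ≤ r := hx.2.le
    have hsp : ∀ ρ ∈ Set.Icc x r, 0 < s ρ := fun ρ hρ =>
      hspos ρ ⟨lt_of_lt_of_le hx.1 hρ.1, hρ.2⟩
    have hIccsub : Set.Icc x r ⊆ Set.Icc 0 r := Set.Icc_subset_Icc hx.1.le le_rfl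
    -- rewrite LHS integrand on [x,r]
    have hinner : ∀ ρ ∈ Set.Icc x r,
        (∫ t in (0:ℝ)..ρ, (s t / (s ρ) ^ 2) * R t) = ((s ρ)^2)⁻¹ * F ρ := by
      intro ρ hρ
      have h0ρ : (0:ℝ) ≤ ρ := le_trans hx.1.le hρ.1
      have : (∫ t in (0:ℝ)..ρ, (s t / (s ρ) ^ 2) * R t)
          = ∫ t in (0:ℝ)..ρ, ((s ρ)^2)⁻¹ * g t := by
        apply integral_congr
        intro t ht
        rw [Set.uIcc_of_le h0ρ] at ht
        have htr : t ∈ Set.Icc (0:ℝ) r := ⟨ht.1, le_trans ht.2 hρ.2⟩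
        simp only [hgdef, hReq t htr]
        ring
      rw [this, intervalIntegral.integral_const_mul]
    have hLrw : (∫ ρ in x..r, ∫ t in (0:ℝ)..ρ, (s t / (s ρ) ^ 2) * R t)
        = ∫ ρ in x..r, ((s ρ)^2)⁻¹ * F ρ := by
      apply integral_congr
      intro ρ hρ
      rw [Set.uIcc_of_le hxr] at hρ
      exact hinner ρ hρ
    -- integration by parts
    have hu : ∀ ρ ∈ Set.uIcc x r, HasDerivAt F (g ρ) ρ := fun ρ _ => hF ρ
    have hv : ∀ ρ ∈ Set.uIcc x r, HasDerivAt (fun ρ => c ρ / s ρ) (-((s ρ)^2)⁻¹) ρ := by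
      intro ρ hρ
      rw [Set.uIcc_of_le hxr] at hρ
      exact hct ρ (hsp ρ hρ).ne'
    have hune : ∀ ρ ∈ Set.Icc x r, s ρ ≠ 0 := fun ρ hρ => (hsp ρ hρ).ne'
    have hvcont : ContinuousOn (fun ρ => c ρ / s ρ) (Set.Icc x r) :=
      hccont.continuousOn.div hscont.continuousOn hune
    have hv'int : IntervalIntegrable (fun ρ => -((s ρ)^2)⁻¹) volume x r := by
      apply ContinuousOn.intervalIntegrable
      rw [Set.uIcc_of_le hxr]
      exact (((hscont.pow 2).continuousOn).inv₀ (fun ρ hρ => pow_ne_zero 2 (hune ρ hρ))).neg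
    have hibp := integral_mul_deriv_eq_deriv_mul hu hv
      (hgc.intervalIntegrable x r) hv'int
    -- ∫ F ρ * (-(s ρ^2)⁻¹) = - ∫ (s ρ^2)⁻¹ * F ρ
    have hneg : (∫ ρ in x..r, F ρ * (-((s ρ)^2)⁻¹))
        = - ∫ ρ in x..r, ((s ρ)^2)⁻¹ * F ρ := by
      rw [← intervalIntegral.integral_neg]
      apply integral_congr
      intro ρ _
      ring
    -- decompose RHS integral
    have hgvint : IntervalIntegrable (fun ρ => g ρ * (c ρ / s ρ)) volume x r := by
      apply ContinuousOn.intervalIntegrable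
      rw [Set.uIcc_of_le hxr]
      exact hgc.continuousOn.mul hvcont
    have hRHSrw : (∫ t in x..r, (c t / s t - c r / s r) * s t * R t)
        = (∫ ρ in x..r, g ρ * (c ρ / s ρ)) - (c r / s r) * (F r - F x) := by
      have h1 : (∫ t in x..r, (c t / s t - c r / s r) * s t * R t)
          = ∫ t in x..r, (g t * (c t / s t) - (c r / s r) * g t) := by
        apply integral_congr
        intro t ht
        rw [Set.uIcc_of_le hxr] at ht
        simp only [hgdef, hReq t (hIccsub ht)]
        ring
      rw [h1, integral_sub hgvint (((hgc.intervalIntegrable (μ := MeasureTheory.volume) x r)).const_mul _),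
        intervalIntegral.integral_const_mul]
      have h2 : (∫ t in x..r, g t) = F r - F x := by
        have h3 := integral_add_adjacent_intervals (hgc.intervalIntegrable (μ := MeasureTheory.volume) 0 x)
          (hgc.intervalIntegrable x r)
        simp only [hFdef]
        linarith
      rw [h2]
    rw [hLrw, hRHSrw]
    have hvr : s r ≠ 0 := (hspos r ⟨hr, le_rfl⟩).ne'
    linarith [hibp, hneg]
  -- limits as x → 0⁺
  have hneIoc : 𝓝[Set.Ioc (0:ℝ) r] 0 = 𝓝[>] (0:ℝ) := nhdsWithin_Ioc_eq_nhdsGT hr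
  have hIccInt : MeasureTheory.IntegrableOn
      (fun ρ => ∫ t in (0:ℝ)..ρ, (s t / (s ρ) ^ 2) * R t) (Set.uIcc 0 r) volume := by
    rw [Set.uIcc_of_le hr.le]
    exact (integrableOn_Icc_iff_integrableOn_Ioc).mpr hInt.1
  have hIccInt' : MeasureTheory.IntegrableOn
      (fun t => (c t / s t - c r / s r) * s t * R t) (Set.uIcc 0 r) volume := by
    rw [Set.uIcc_of_le hr.le]
    exact (integrableOn_Icc_iff_integrableOn_Ioc).mpr hInt'.1
  have hsubIcc : 𝓝[>] (0:ℝ) ≤ 𝓝[Set.uIcc 0 r] (0:ℝ) := by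
    rw [← hneIoc, Set.uIcc_of_le hr.le]
    exact nhdsWithin_mono _ Set.Ioc_subset_Icc_self
  have hT1 : Tendsto (fun x => ∫ ρ in x..r, ∫ t in (0:ℝ)..ρ, (s t / (s ρ) ^ 2) * R t)
      (𝓝[>] (0:ℝ)) (𝓝 (∫ ρ in (0:ℝ)..r, ∫ t in (0:ℝ)..ρ, (s t / (s ρ) ^ 2) * R t)) := by
    have := (continuousOn_primitive_interval_left hIccInt) 0 left_mem_uIcc
    exact this.tendsto.mono_left hsubIcc
  have hT2 : Tendsto (fun x => ∫ t in x..r, (c t / s t - c r / s r) * s t * R t)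
      (𝓝[>] (0:ℝ)) (𝓝 (∫ t in (0:ℝ)..r, (c t / s t - c r / s r) * s t * R t)) := by
    have := (continuousOn_primitive_interval_left hIccInt') 0 left_mem_uIcc
    exact this.tendsto.mono_left hsubIcc
  -- the extra term tends to 0
  have hsubne : 𝓝[>] (0:ℝ) ≤ 𝓝[≠] (0:ℝ) :=
    nhdsWithin_mono _ fun x hx => ne_of_gt hx
  have hFx : Tendsto (fun x => F x / x) (𝓝[>] (0:ℝ)) (𝓝 0) := by
    have h1 := hasDerivAt_iff_tendsto_slope.mp (hF 0)
    have hg0 : g 0 = 0 := by simp [hgdef, hs0]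
    rw [hg0] at h1
    have h2 : Tendsto (fun x => F x / x) (𝓝[≠] (0:ℝ)) (𝓝 0) := by
      apply h1.congr
      intro x
      simp [slope_def_field, hF0]
    exact h2.mono_left hsubne
  have hsx : Tendsto (fun x => x / s x) (𝓝[>] (0:ℝ)) (𝓝 1) := by
    have h1 := hasDerivAt_iff_tendsto_slope.mp (hs 0)
    rw [hs'0] at h1
    have h2 : Tendsto (fun x => s x / x) (𝓝[≠] (0:ℝ)) (𝓝 1) := by
      apply h1.congr
      intro x
      simp [slope_def_field, hs0]
    have h3 := h2.inv₀ one_ne_zero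
    simp only [inv_one] at h3
    have h4 : Tendsto (fun x => x / s x) (𝓝[≠] (0:ℝ)) (𝓝 1) := by
      apply h3.congr
      intro x
      rw [inv_div]
    exact h4.mono_left hsubne
  have hcx : Tendsto c (𝓝[>] (0:ℝ)) (𝓝 1) := by
    have := hccont.continuousAt (x := (0:ℝ)).tendsto
    rw [hc0] at this
    exact this.mono_left nhdsWithin_le_nhds
  have hFtend : Tendsto F (𝓝[>] (0:ℝ)) (𝓝 0) := by
    have := (hF 0).continuousAt.tendsto
    rw [hF0] at this
    exact this.mono_left nhdsWithin_le_nhds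
  have hEv : ∀ᶠ x in 𝓝[>] (0:ℝ), x ∈ Set.Ioo (0:ℝ) r := by
    filter_upwards [self_mem_nhdsWithin,
      eventually_nhdsWithin_of_eventually_nhds (eventually_lt_nhds hr)] with x h1 h2
    exact ⟨h1, h2⟩
  have hT3 : Tendsto (fun x => F x * (c x / s x - c r / s r)) (𝓝[>] (0:ℝ)) (𝓝 0) := by
    have hA : Tendsto (fun x => F x / x * (x / s x) * c x) (𝓝[>] (0:ℝ)) (𝓝 0) := by
      have := (hFx.mul hsx).mul hcx
      simpa using this
    have hB : Tendsto (fun x => F x * (c x / s x)) (𝓝[>] (0:ℝ)) (𝓝 0) := by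
      apply hA.congr'
      filter_upwards [hEv] with x hx
      have hxne : x ≠ 0 := ne_of_gt hx.1
      have hsne : s x ≠ 0 := (hspos x ⟨hx.1, hx.2.le⟩).ne'
      field_simp
    have hC := hB.sub (hFtend.mul_const (c r / s r))
    simp only [zero_mul, sub_zero] at hC
    apply hC.congr
    intro x
    ring
  have hT23 := hT2.add hT3
  rw [add_zero] at hT23
  refine tendsto_nhds_unique hT1 (hT23.congr' ?_)
  filter_upwards [hEv] with x hx
  exact (hkey x hx).symm
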